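/- (Determinant representation, trigonometric case, second form.) Let q ∈ ℂ with q ≠ 0 and q² ≠ 1, and let y_1,…,y_N ∈ ℂ be nonzero, pairwise distinct, and satisfy q² y_j ≠ y_k for all j ≠ k. Set ã(x) = ∏_{k=1}^N (q x − q^{−1} y_k) and d̃(x) = ∏_{k=1}^N (x − y_k). Let p_1,…,p_N ∈ ℂ[x] be polynomials of degree at most N−1 whose N×N coefficient matrix is invertible. Then there exists a polynomial P ∈ ℂ[x_1,…,x_N] satisfying the trigonometric DWBC conditions such that for all x_1,…,x_N ∈ ℂ: P(x_1,…,x_N) · (∏_{j=1}^N x_j) · det[ p_k(x_j) ]_{j,k=1,…,N} = det[ p_k(x_j) ã(x_j) − q^{−N} p_k(q² x_j) d̃(x_j) ]_{j,k=1,…,N}. -/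

import Mathlib

open scoped BigOperators

namespace SixVertexTrig

/-- A polynomial `P ∈ ℂ[x_1,…,x_N]` satisfies the trigonometric DWBC conditions if it is
symmetric, of degree at most `N-1` in each variable, vanishes whenever two of its
arguments equal `y_j` and `q⁻² y_j` (for some `j`), and takes the value
`(q - q⁻¹)^N ∏_{j≠k} (q y_j - q⁻¹ y_k)` at `x = y`.  (Since `P` is required to be
symmetric, the vanishing condition is phrased via an arbitrary pair of distinct
argument slots carrying the two values.) -/
def TrigCond (N : ℕ) (q : ℂ) (y : Fin N → ℂ) (P : MvPolynomial (Fin N) ℂ) : Prop :=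
  P.IsSymmetric ∧
  (∀ j : Fin N, P.degreeOf j ≤ N - 1) ∧
  (∀ (j : Fin N) (x : Fin N → ℂ) (i₁ i₂ : Fin N), i₁ ≠ i₂ →
    x i₁ = y j → x i₂ = (q ^ 2)⁻¹ * y j → MvPolynomial.eval x P = 0) ∧
  MvPolynomial.eval y P =
    (q - q⁻¹) ^ N * ∏ j, ∏ k ∈ Finset.univ.erase j, (q * y j - q⁻¹ * y k)

/-- The polynomial `p_i(x) = ∑_{j=1}^N p_{ij} x^{j-1}` of degree at most `N-1`,
determined by the row `i` of a coefficient matrix `p`. -/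
noncomputable def pval {N : ℕ} (p : Matrix (Fin N) (Fin N) ℂ) (i : Fin N) (x : ℂ) : ℂ :=
  ∑ j, p i j * x ^ (j : ℕ)

/-- `ã(x) = ∏_{k=1}^N (q x - q⁻¹ y_k)`. -/
noncomputable def aTil (N : ℕ) (q : ℂ) (y : Fin N → ℂ) (x : ℂ) : ℂ :=
  ∏ k, (q * x - q⁻¹ * y k)

/-- `d̃(x) = ∏_{k=1}^N (x - y_k)`. -/
noncomputable def dTil (N : ℕ) (y : Fin N → ℂ) (x : ℂ) : ℂ :=
  ∏ k, (x - y k)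

end SixVertexTrig

noncomputable section SVAux

namespace SVAux

open MvPolynomial

variable {σ : Type*} [DecidableEq σ]

lemma aeval_eq_eval (x : σ → ℂ) (f : MvPolynomial σ ℂ) :
    (aeval x : MvPolynomial σ ℂ →ₐ[ℂ] ℂ) f = eval x f := by
  rw [aeval_eq_eval₂Hom, Algebra.algebraMap_self]; rfl

lemma dvd_sub_subst (i j : σ) (f : MvPolynomial σ ℂ) :
    (X i - X j) ∣ f - aeval (Function.update X i (X j)) f := by
  induction f using MvPolynomial.induction_on with
  | C a => simp
  | add p r hp hr =>
      have : p + r - aeval (Function.update X i (X j)) (p + r)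
          = (p - aeval (Function.update X i (X j)) p)
            + (r - aeval (Function.update X i (X j)) r) := by
        rw [map_add]; ring
      rw [this]; exact dvd_add hp hr
  | mul_X p k hp =>
      have hxk : p * X k - aeval (Function.update X i (X j)) (p * X k)
          = (p - aeval (Function.update X i (X j)) p) * X k
            + aeval (Function.update X i (X j)) p
              * (X k - Function.update X i (X j) k) := by
        rw [map_mul, aeval_X]; ring
      rw [hxk]
      refine dvd_add (hp.mul_right _) ?_
      by_cases hk : k = i
      · subst hk; rw [Function.update_self]; exact (dvd_refl _).mul_left _
      · rw [Function.update_of_ne hk]; simp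

lemma dvd_of_subst_eq_zero {i j : σ} {f : MvPolynomial σ ℂ}
    (h : aeval (Function.update X i (X j) : σ → MvPolynomial σ ℂ) f = 0) :
    (X i - X j) ∣ f := by
  have h2 := dvd_sub_subst i j f
  rw [h, sub_zero] at h2
  exact h2

lemma prime_X_sub_X {i j : σ} (hij : i ≠ j) : Prime (X i - X j : MvPolynomial σ ℂ) := by
  classical
  have hker : RingHom.ker (aeval (Function.update X i (X j)) :
      MvPolynomial σ ℂ →ₐ[ℂ] MvPolynomial σ ℂ).toRingHom = Ideal.span {X i - X j} := by
    apply le_antisymm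
    · intro f hf
      rw [Ideal.mem_span_singleton]
      exact dvd_of_subst_eq_zero (RingHom.mem_ker.mp hf)
    · rw [Ideal.span_le]
      intro f hf
      simp only [Set.mem_singleton_iff] at hf
      subst hf
      rw [SetLike.mem_coe, RingHom.mem_ker]
      show (aeval (Function.update X i (X j)) :
        MvPolynomial σ ℂ →ₐ[ℂ] MvPolynomial σ ℂ) (X i - X j) = 0
      rw [map_sub]
      simp [aeval_X, Function.update_self, Function.update_of_ne (Ne.symm hij)]
  have hprime : (Ideal.span {(X i - X j : MvPolynomial σ ℂ)}).IsPrime := by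
    rw [← hker]
    exact RingHom.ker_isPrime _
  have hne : (X i - X j : MvPolynomial σ ℂ) ≠ 0 :=
    sub_ne_zero.mpr (fun h => hij (MvPolynomial.X_injective h))
  exact (Ideal.span_singleton_prime hne).mp hprime

lemma prod_primes_dvd {R : Type*} [CommRing R] [IsDomain R] {ι : Type*} [DecidableEq ι]
    (s : Finset ι) (f : ι → R) (m : R)
    (hp : ∀ i ∈ s, Prime (f i)) (hnd : ∀ i ∈ s, ∀ j ∈ s, i ≠ j → ¬ f i ∣ f j)
    (hd : ∀ i ∈ s, f i ∣ m) : (∏ i ∈ s, f i) ∣ m := by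
  classical
  induction s using Finset.induction_on generalizing m with
  | empty => simp
  | insert a s ha ih =>
      obtain ⟨t, ht⟩ := hd a (Finset.mem_insert_self a s)
      rw [Finset.prod_insert ha, ht]
      refine mul_dvd_mul_left _ (ih t (fun i hi => hp i (Finset.mem_insert_of_mem hi))
        (fun i hi j hj hij => hnd i (Finset.mem_insert_of_mem hi) j
          (Finset.mem_insert_of_mem hj) hij) ?_)
      intro i hi
      have hdvd : f i ∣ f a * t := ht ▸ hd i (Finset.mem_insert_of_mem hi)
      rcases (hp i (Finset.mem_insert_of_mem hi)).dvd_or_dvd hdvd with h | h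
      · exact absurd h (hnd i (Finset.mem_insert_of_mem hi) a (Finset.mem_insert_self a s)
          (fun he => ha (he ▸ hi)))
      · exact h

lemma degreeOf_aeval_X {N : ℕ} (f : Polynomial ℂ) (a i : Fin N) :
    degreeOf i (Polynomial.aeval (X a) f : MvPolynomial (Fin N) ℂ)
      ≤ if i = a then f.natDegree else 0 := by
  classical
  rw [Polynomial.aeval_def, Polynomial.eval₂_eq_sum, Polynomial.sum_def]
  refine le_trans (degreeOf_sum_le _ _ _) ?_
  rw [Finset.sup_le_iff]
  intro e he
  refine le_trans (degreeOf_mul_le _ _ _) ?_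
  have h1 : degreeOf i (algebraMap ℂ (MvPolynomial (Fin N) ℂ) (f.coeff e)) = 0 := by
    simpa using degreeOf_C (f.coeff e) i
  have h2 : degreeOf i ((X a : MvPolynomial (Fin N) ℂ) ^ e) ≤ e * degreeOf i (X a) :=
    degreeOf_pow_le _ _ _
  rw [h1, zero_add]
  refine le_trans h2 ?_
  by_cases hia : i = a
  · subst hia
    simp only [if_pos rfl]
    rw [MvPolynomial.degreeOf_X]
    simpa using Polynomial.le_natDegree_of_mem_supp e he
  · rw [MvPolynomial.degreeOf_X, if_neg hia, if_neg hia]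
    simp


lemma eval_aeval_X (x : σ → ℂ) (j : σ) (f : Polynomial ℂ) :
    eval x (Polynomial.aeval (X j) f : MvPolynomial σ ℂ) = f.eval (x j) := by
  rw [Polynomial.aeval_def, Polynomial.hom_eval₂]
  have hcomp : (eval x : MvPolynomial σ ℂ →+* ℂ).comp (algebraMap ℂ (MvPolynomial σ ℂ))
      = RingHom.id ℂ := RingHom.ext fun r => by simp [MvPolynomial.algebraMap_eq]
  rw [hcomp, eval_X]
  rfl

lemma X_ne_C {a : σ} {c : ℂ} : (X a : MvPolynomial σ ℂ) ≠ C c := by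
  intro h
  have h1 := congrArg (coeff (Finsupp.single a 1)) h
  rw [MvPolynomial.coeff_X, MvPolynomial.coeff_C] at h1
  rw [if_pos rfl, if_neg (fun h => one_ne_zero (Finsupp.single_eq_zero.mp h.symm))] at h1
  exact one_ne_zero h1

end SVAux

namespace SVAux2

open Polynomial

/-- `ã(x)` as a univariate polynomial. -/
def atilP (N : ℕ) (q : ℂ) (y : Fin N → ℂ) : Polynomial ℂ :=
  ∏ k, (C q * X - C (q⁻¹ * y k))

/-- `d̃(x)` as a univariate polynomial. -/
def dtilP (N : ℕ) (y : Fin N → ℂ) : Polynomial ℂ :=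
  ∏ k, (X - C (y k))

/-- `g_k(x) = x^k (ã(x) - q^{2k-N} d̃(x))`. -/
def gP (N : ℕ) (q : ℂ) (y : Fin N → ℂ) (k : Fin N) : Polynomial ℂ :=
  X ^ (k : ℕ) * (atilP N q y - C (q ^ (2 * (k : ℕ)) * q ^ (-(N : ℤ))) * dtilP N y)

/-- `h_k = g_k / x`. -/
def hP (N : ℕ) (q : ℂ) (y : Fin N → ℂ) (k : Fin N) : Polynomial ℂ :=
  (gP N q y k).divX

lemma atilP_eval (N : ℕ) (q : ℂ) (y : Fin N → ℂ) (t : ℂ) :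
    (atilP N q y).eval t = ∏ k, (q * t - q⁻¹ * y k) := by
  simp [atilP, eval_prod]

lemma dtilP_eval (N : ℕ) (y : Fin N → ℂ) (t : ℂ) :
    (dtilP N y).eval t = ∏ k, (t - y k) := by
  simp [dtilP, eval_prod]

lemma gP_eval (N : ℕ) (q : ℂ) (y : Fin N → ℂ) (k : Fin N) (t : ℂ) :
    (gP N q y k).eval t = t ^ (k : ℕ) *
      ((∏ m, (q * t - q⁻¹ * y m)) -
        q ^ (2 * (k : ℕ)) * q ^ (-(N : ℤ)) * ∏ m, (t - y m)) := by
  simp [gP, atilP_eval, dtilP_eval]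

lemma gP_coeff_zero (N : ℕ) (q : ℂ) (y : Fin N → ℂ) (k : Fin N) :
    (gP N q y k).coeff 0 = 0 := by
  rw [coeff_zero_eq_eval_zero, gP_eval]
  rcases Nat.eq_zero_or_pos (k : ℕ) with h | h
  · rw [h]
    have h1 : (∏ m, (q * (0:ℂ) - q⁻¹ * y m)) = (-1) ^ N * (q⁻¹) ^ N * ∏ m, y m := by
      rw [show (fun m => q * (0:ℂ) - q⁻¹ * y m) = fun m => (-1) * (q⁻¹ * y m) by
        funext m; ring]
      rw [Finset.prod_mul_distrib, Finset.prod_const, Finset.prod_mul_distrib,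
        Finset.prod_const, Finset.card_univ, Fintype.card_fin]
      ring
    have h2 : (∏ m, ((0:ℂ) - y m)) = (-1) ^ N * ∏ m, y m := by
      rw [show (fun m => (0:ℂ) - y m) = fun m => (-1) * y m by funext m; ring]
      rw [Finset.prod_mul_distrib, Finset.prod_const, Finset.card_univ, Fintype.card_fin]
    rw [h1, h2]
    have hw : q ^ (-(N : ℤ)) = (q⁻¹) ^ N := by
      rw [zpow_neg, zpow_natCast, inv_pow]
    rw [hw]
    ring_nf
  · rw [zero_pow (Nat.pos_iff_ne_zero.mp h), zero_mul]

lemma hP_mul_X (N : ℕ) (q : ℂ) (y : Fin N → ℂ) (k : Fin N) :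
    hP N q y k * X = gP N q y k := by
  have := divX_mul_X_add (gP N q y k)
  rw [gP_coeff_zero N q y k] at this
  simpa [hP] using this

lemma hP_eval_mul (N : ℕ) (q : ℂ) (y : Fin N → ℂ) (k : Fin N) (t : ℂ) :
    (hP N q y k).eval t * t = t ^ (k : ℕ) *
      ((∏ m, (q * t - q⁻¹ * y m)) -
        q ^ (2 * (k : ℕ)) * q ^ (-(N : ℤ)) * ∏ m, (t - y m)) := by
  have := congrArg (Polynomial.eval t) (hP_mul_X N q y k)
  rw [eval_mul, eval_X, gP_eval] at this
  exact this

lemma hP_natDegree_le (N : ℕ) (q : ℂ) (y : Fin N → ℂ) (k : Fin N) :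
    (hP N q y k).natDegree ≤ (k : ℕ) + N - 1 := by
  have h1 : (atilP N q y).natDegree ≤ N := by
    refine le_trans (natDegree_prod_le _ _) ?_
    have hb : ∀ m : Fin N, (C q * X - C (q⁻¹ * y m)).natDegree ≤ 1 := fun m =>
      le_trans (natDegree_sub_le _ _) (by
        simp only [natDegree_C, max_le_iff]
        constructor
        · exact le_trans (natDegree_C_mul_le _ _) natDegree_X_le
        · omega)
    refine le_trans (Finset.sum_le_sum (fun m (_ : m ∈ Finset.univ) => hb m)) (by simp)
  have h2 : (dtilP N y).natDegree ≤ N := by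
    refine le_trans (natDegree_prod_le _ _) ?_
    refine le_trans (Finset.sum_le_sum (fun (m : Fin N) (_ : m ∈ Finset.univ) =>
      (le_trans (natDegree_sub_le _ _) (by simp [natDegree_X_le]) :
        (X - C (y m)).natDegree ≤ 1))) (by simp)
  have h3 : (gP N q y k).natDegree ≤ (k : ℕ) + N := by
    refine le_trans (natDegree_mul_le) ?_
    have hb : (atilP N q y - C (q ^ (2 * (k : ℕ)) * q ^ (-(N : ℤ))) * dtilP N y).natDegree ≤ N :=
      le_trans (natDegree_sub_le _ _) (by
        simp only [max_le_iff]
        exact ⟨h1, le_trans (natDegree_C_mul_le _ _) h2⟩)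
    have hx : (X ^ (k:ℕ) : Polynomial ℂ).natDegree = (k : ℕ) := natDegree_X_pow _
    omega
  have h4 : (hP N q y k).natDegree = (gP N q y k).natDegree - 1 :=
    natDegree_divX_eq_natDegree_tsub_one
  omega

end SVAux2

namespace SVMain

open MvPolynomial SVAux SVAux2

variable (N : ℕ) (q : ℂ) (y : Fin N → ℂ)

/-- The matrix `[h_k(x_j)]` over the multivariate polynomial ring. -/
def Hmat : Matrix (Fin N) (Fin N) (MvPolynomial (Fin N) ℂ) :=
  Matrix.of fun j k => Polynomial.aeval (MvPolynomial.X j) (hP N q y k)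

/-- The Vandermonde determinant in the variables. -/
def Vpoly : MvPolynomial (Fin N) ℂ :=
  (Matrix.vandermonde fun i => (MvPolynomial.X i : MvPolynomial (Fin N) ℂ)).det

lemma Vpoly_eq_prod :
    Vpoly N = ∏ x ∈ Finset.univ.sigma (fun a : Fin N => Finset.Ioi a),
      ((X x.2 : MvPolynomial (Fin N) ℂ) - X x.1) := by
  rw [Vpoly, Matrix.det_vandermonde, Finset.prod_sigma']

lemma Vpoly_ne_zero : Vpoly N ≠ 0 := by
  rw [Vpoly, Ne, Matrix.det_vandermonde_eq_zero_iff]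
  rintro ⟨i, j, hij, hne⟩
  exact hne (MvPolynomial.X_injective hij)

lemma exists_sep_point {a b c d : Fin N} (hab : a < b) (hcd : c < d)
    (hne : ¬(a = c ∧ b = d)) : ∃ z : Fin N → ℂ, z a = z b ∧ z c ≠ z d := by
  classical
  by_cases hd1 : d = a ∨ d = b
  · -- then c ∉ {a, b}
    have hca : c ≠ a := by
      rcases hd1 with h | h
      · intro hc; subst hc; exact absurd (h ▸ hcd) (lt_irrefl _)  -- d = a = c contradicts c < d? no
      · intro hc; subst hc; exact hne ⟨rfl, h.symm ▸ rfl⟩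
    have hcb : c ≠ b := by
      rcases hd1 with h | h
      · intro hc; subst hc; subst h; exact absurd (lt_trans hcd hab) (lt_irrefl _)
      · intro hc; subst hc; subst h; exact absurd hcd (lt_irrefl _)
    refine ⟨fun m => if m = c then 1 else 0, by simp [Ne.symm hca, Ne.symm hcb], ?_⟩
    simp [if_neg (Ne.symm (ne_of_lt hcd))]
  · push_neg at hd1
    refine ⟨fun m => if m = d then 1 else 0, by simp [Ne.symm hd1.1, Ne.symm hd1.2], ?_⟩
    simp [if_neg (ne_of_lt hcd)]

lemma Vpoly_dvd_detH : Vpoly N ∣ (Hmat N q y).det := by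
  classical
  rw [Vpoly_eq_prod]
  refine prod_primes_dvd _ _ _ ?_ ?_ ?_
  · rintro ⟨a, b⟩ hab
    rw [Finset.mem_sigma] at hab
    exact prime_X_sub_X (ne_of_gt (Finset.mem_Ioi.mp hab.2))
  · rintro ⟨a, b⟩ hab ⟨c, d⟩ hcd hne hdvd
    rw [Finset.mem_sigma, Finset.mem_Ioi] at hab hcd
    have hne' : ¬(a = c ∧ b = d) := by
      rintro ⟨rfl, rfl⟩; exact hne rfl
    obtain ⟨z, hz1, hz2⟩ := exists_sep_point N hab.2 hcd.2 hne'
    obtain ⟨m, hm⟩ := hdvd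
    have := congrArg (eval z) hm
    simp only [map_sub, map_mul, eval_X] at this
    rw [hz1, sub_self, zero_mul, sub_eq_zero] at this
    exact hz2 this.symm
  · rintro ⟨a, b⟩ hab
    rw [Finset.mem_sigma, Finset.mem_Ioi] at hab
    have hba : b ≠ a := ne_of_gt hab.2
    refine dvd_of_subst_eq_zero (i := b) (j := a) ?_
    have hmap : (aeval (Function.update X b (X a) : Fin N → MvPolynomial (Fin N) ℂ))
        ((Hmat N q y).det) = ((Hmat N q y).map
          (aeval (Function.update X b (X a) : Fin N → MvPolynomial (Fin N) ℂ))).det :=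
      RingHom.map_det _ _
    rw [hmap]
    refine Matrix.det_zero_of_row_eq hba ?_
    funext k
    simp only [Matrix.map_apply, Hmat, Matrix.of_apply, RingHom.coe_coe]
    rw [← Polynomial.aeval_algHom_apply, ← Polynomial.aeval_algHom_apply]
    rw [aeval_X, aeval_X, Function.update_self, Function.update_of_ne (Ne.symm hba)]

lemma Hmat_map_rename (e : Equiv.Perm (Fin N)) :
    (Hmat N q y).map (rename e) = (Hmat N q y).submatrix e id := by
  funext j k
  simp only [Matrix.map_apply, Matrix.submatrix_apply, Hmat, Matrix.of_apply, id_eq]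
  rw [← Polynomial.aeval_algHom_apply, rename_X]

lemma rename_detH (e : Equiv.Perm (Fin N)) :
    rename e ((Hmat N q y).det) =
      ((Equiv.Perm.sign e : ℤ) : MvPolynomial (Fin N) ℂ) * (Hmat N q y).det := by
  have h1 : rename e ((Hmat N q y).det) = ((Hmat N q y).map (rename e)).det :=
    RingHom.map_det _ _
  rw [h1, Hmat_map_rename, Matrix.det_permute]

lemma rename_Vpoly (e : Equiv.Perm (Fin N)) :
    rename e (Vpoly N) =
      ((Equiv.Perm.sign e : ℤ) : MvPolynomial (Fin N) ℂ) * Vpoly N := by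
  have h1 : rename e (Vpoly N) =
      ((Matrix.vandermonde fun i => (X i : MvPolynomial (Fin N) ℂ)).map (rename e)).det :=
    RingHom.map_det _ _
  have h2 : (Matrix.vandermonde fun i => (X i : MvPolynomial (Fin N) ℂ)).map (rename e)
      = (Matrix.vandermonde fun i => (X i : MvPolynomial (Fin N) ℂ)).submatrix e id := by
    funext j k
    simp [Matrix.vandermonde, map_pow]
  rw [h1, h2, Matrix.det_permute, Vpoly]


theorem main_aux (n : ℕ) (q : ℂ) (hq : q ≠ 0) (hq2 : q ^ 2 ≠ 1)
    (y : Fin (n+1) → ℂ) (hy0 : ∀ j, y j ≠ 0) (hy : Function.Injective y)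
    (hyq : ∀ j k : Fin (n+1), j ≠ k → q ^ 2 * y j ≠ y k)
    (p : Matrix (Fin (n+1)) (Fin (n+1)) ℂ) :
    ∃ P : MvPolynomial (Fin (n+1)) ℂ, SixVertexTrig.TrigCond (n+1) q y P ∧
      ∀ x : Fin (n+1) → ℂ,
        MvPolynomial.eval x P * (∏ j, x j) *
            Matrix.det (Matrix.of fun j k : Fin (n+1) => SixVertexTrig.pval p k (x j)) =
          Matrix.det (Matrix.of fun j k : Fin (n+1) =>
            SixVertexTrig.pval p k (x j) * SixVertexTrig.aTil (n+1) q y (x j) -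
              q ^ (-((n+1 : ℕ) : ℤ)) * SixVertexTrig.pval p k (q ^ 2 * x j) *
                SixVertexTrig.dTil (n+1) y (x j)) := by
  classical
  obtain ⟨P, hDH⟩ := Vpoly_dvd_detH (n+1) q y
  -- basic nonvanishing facts
  have hV0 : Vpoly (n+1) ≠ 0 := Vpoly_ne_zero (n+1)
  have hvdm_y : (Matrix.vandermonde y).det ≠ 0 :=
    Matrix.det_vandermonde_ne_zero_iff.mpr hy
  have hqq : q - q⁻¹ ≠ 0 := by
    rw [sub_ne_zero]
    intro h
    refine hq2 ?_
    rw [pow_two]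
    nth_rewrite 2 [h]
    exact mul_inv_cancel₀ hq
  have hA0 : ∀ j, (∏ m, (q * y j - q⁻¹ * y m)) ≠ 0 := by
    intro j
    rw [Finset.prod_ne_zero_iff]
    intro m _
    by_cases hm : m = j
    · subst hm
      have : q * y m - q⁻¹ * y m = (q - q⁻¹) * y m := by ring
      rw [this]
      exact mul_ne_zero hqq (hy0 m)
    · rw [sub_ne_zero]
      intro h
      refine hyq j m (fun he => hm he.symm) ?_
      rw [pow_two, mul_assoc, h]
      field_simp
  -- evaluation of h_k at y j
  have hE1 : ∀ (j k : Fin (n+1)),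
      (hP (n+1) q y k).eval (y j) * y j = y j ^ (k:ℕ) * ∏ m, (q * y j - q⁻¹ * y m) := by
    intro j k
    have h := hP_eval_mul (n+1) q y k (y j)
    rw [show (∏ m, (y j - y m)) = 0 from
      Finset.prod_eq_zero (Finset.mem_univ j) (sub_self (y j))] at h
    rw [h]; ring
  -- evaluation of h_k at (q^2)⁻¹ * y j
  have hE2 : ∀ (j k : Fin (n+1)),
      (hP (n+1) q y k).eval ((q^2)⁻¹ * y j) * ((q^2)⁻¹ * y j) =
        -(q ^ (2*(k:ℕ)) * q ^ (-((n+1:ℕ) : ℤ)) *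
          (((q^2)⁻¹ * y j) ^ (k:ℕ) * ∏ m, ((q^2)⁻¹ * y j - y m))) := by
    intro j k
    have h := hP_eval_mul (n+1) q y k ((q^2)⁻¹ * y j)
    have hz : (∏ m, (q * ((q^2)⁻¹ * y j) - q⁻¹ * y m)) = 0 := by
      refine Finset.prod_eq_zero (Finset.mem_univ j) ?_
      have h5 : q * ((q^2)⁻¹ * y j) = q⁻¹ * y j := by
        rw [pow_two]
        field_simp
      rw [h5, sub_self]
    rw [hz] at h
    rw [h]; ring
  -- the row proportionality constant
  have hcrel : ∀ j : Fin (n+1), ∃ c : ℂ, ∀ k,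
      (hP (n+1) q y k).eval ((q^2)⁻¹ * y j) = c * (hP (n+1) q y k).eval (y j) := by
    intro j
    refine ⟨-(q^2 * q ^ (-((n+1:ℕ) : ℤ)) * (∏ m, ((q^2)⁻¹ * y j - y m)))
      / (∏ m, (q * y j - q⁻¹ * y m)), fun k => ?_⟩
    have hs0 : (q^2)⁻¹ * y j ≠ 0 :=
      mul_ne_zero (inv_ne_zero (pow_ne_zero 2 hq)) (hy0 j)
    have h1 := hE1 j k
    have h2 := hE2 j k
    have hevy : (hP (n+1) q y k).eval (y j)
        = y j ^ (k:ℕ) * (∏ m, (q * y j - q⁻¹ * y m)) / y j := by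
      rw [eq_div_iff (hy0 j)]; exact h1
    have hevs : (hP (n+1) q y k).eval ((q^2)⁻¹ * y j)
        = -(q ^ (2*(k:ℕ)) * q ^ (-((n+1:ℕ) : ℤ)) *
          (((q^2)⁻¹ * y j) ^ (k:ℕ) * ∏ m, ((q^2)⁻¹ * y j - y m))) / ((q^2)⁻¹ * y j) := by
      rw [eq_div_iff hs0]; exact h2
    have hsk : ((q^2)⁻¹ * y j) ^ (k:ℕ) = ((q^2) ^ (k:ℕ))⁻¹ * y j ^ (k:ℕ) := by
      rw [mul_pow, inv_pow]
    have hq2k : q ^ (2 * (k:ℕ)) = (q^2) ^ (k:ℕ) := by rw [pow_mul]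
    refine mul_right_cancel₀
      (mul_ne_zero hs0 (mul_ne_zero (hy0 j) (hA0 j))) ?_
    have hL : (hP (n+1) q y k).eval ((q^2)⁻¹ * y j) * ((q^2)⁻¹ * y j * (y j *
        ∏ m, (q * y j - q⁻¹ * y m)))
        = ((hP (n+1) q y k).eval ((q^2)⁻¹ * y j) * ((q^2)⁻¹ * y j)) *
          (y j * ∏ m, (q * y j - q⁻¹ * y m)) := by ring
    rw [hL, h2]
    have hR : -(q^2 * q ^ (-((n+1:ℕ) : ℤ)) * (∏ m, ((q^2)⁻¹ * y j - y m)))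
        / (∏ m, (q * y j - q⁻¹ * y m)) * (hP (n+1) q y k).eval (y j) *
          ((q^2)⁻¹ * y j * (y j * ∏ m, (q * y j - q⁻¹ * y m)))
        = (-(q^2 * q ^ (-((n+1:ℕ) : ℤ)) * (∏ m, ((q^2)⁻¹ * y j - y m)))
          / (∏ m, (q * y j - q⁻¹ * y m)) * (∏ m, (q * y j - q⁻¹ * y m))) *
          (((hP (n+1) q y k).eval (y j) * y j) * ((q^2)⁻¹ * y j)) := by ring
    rw [hR, h1, div_mul_cancel₀ _ (hA0 j), hq2k, hsk]
    field_simp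
  -- evaluation of det H and V
  have hevalH : ∀ x : Fin (n+1) → ℂ,
      MvPolynomial.eval x ((Hmat (n+1) q y).det)
        = Matrix.det (Matrix.of fun j k => (hP (n+1) q y k).eval (x j)) := by
    intro x
    have h1 : MvPolynomial.eval x ((Hmat (n+1) q y).det)
        = ((Hmat (n+1) q y).map (MvPolynomial.eval x)).det := RingHom.map_det _ _
    rw [h1]
    congr 1
    funext j k
    simp only [Matrix.map_apply, Hmat, Matrix.of_apply]
    exact eval_aeval_X x j _
  have hevalV : ∀ x : Fin (n+1) → ℂ,
      MvPolynomial.eval x (Vpoly (n+1)) = (Matrix.vandermonde x).det := by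
    intro x
    have h1 : MvPolynomial.eval x (Vpoly (n+1))
        = ((Matrix.vandermonde fun i => (X i : MvPolynomial (Fin (n+1)) ℂ)).map
            (MvPolynomial.eval x)).det := RingHom.map_det _ _
    rw [h1]
    congr 1
    funext j k
    simp [Matrix.vandermonde]
  -- symmetry
  have hsym : P.IsSymmetric := by
    intro e
    have h1 : rename e ((Hmat (n+1) q y).det)
        = rename e (Vpoly (n+1)) * rename e P := by rw [hDH, map_mul]
    rw [rename_detH, rename_Vpoly, hDH] at h1
    have hs0 : ((Equiv.Perm.sign e : ℤ) : MvPolynomial (Fin (n+1)) ℂ) ≠ 0 := by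
      rw [Ne, Int.cast_eq_zero]
      exact Units.ne_zero _
    have h2 : (((Equiv.Perm.sign e : ℤ) : MvPolynomial (Fin (n+1)) ℂ) * Vpoly (n+1)) * P
        = (((Equiv.Perm.sign e : ℤ) : MvPolynomial (Fin (n+1)) ℂ) * Vpoly (n+1))
          * rename e P := by
      linear_combination h1
    exact (mul_left_cancel₀ (mul_ne_zero hs0 hV0) h2).symm
  -- degree bound
  have hdegDH : MvPolynomial.degreeOf 0 ((Hmat (n+1) q y).det) ≤ 2 * n := by
    rw [Matrix.det_apply]
    refine le_trans (degreeOf_sum_le _ _ _) ?_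
    refine Finset.sup_le ?_
    intro e _
    have hsmul : (Equiv.Perm.sign e) • (∏ i, Hmat (n+1) q y (e i) i)
        = ((Equiv.Perm.sign e : ℤ) : MvPolynomial (Fin (n+1)) ℂ)
          * ∏ i, Hmat (n+1) q y (e i) i := by
      rw [Units.smul_def, zsmul_eq_mul]
    rw [hsmul]
    refine le_trans (degreeOf_mul_le _ _ _) ?_
    have hC : ((Equiv.Perm.sign e : ℤ) : MvPolynomial (Fin (n+1)) ℂ)
        = MvPolynomial.C ((Equiv.Perm.sign e : ℤ) : ℂ) :=
      (map_intCast (MvPolynomial.C : ℂ →+* MvPolynomial (Fin (n+1)) ℂ) _).symm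
    rw [hC, degreeOf_C, zero_add]
    refine le_trans (degreeOf_prod_le _ _ _) ?_
    have hterm : ∀ k : Fin (n+1), MvPolynomial.degreeOf 0 (Hmat (n+1) q y (e k) k)
        ≤ if k = e.symm 0 then 2 * n else 0 := by
      intro k
      refine le_trans (degreeOf_aeval_X _ _ _) ?_
      by_cases h0 : (0 : Fin (n+1)) = e k
      · rw [if_pos h0, if_pos (by rw [Equiv.eq_symm_apply]; exact h0.symm)]
        have h5 := hP_natDegree_le (n+1) q y k
        have h6 : (k : ℕ) ≤ n := Nat.lt_succ_iff.mp k.isLt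
        omega
      · rw [if_neg h0, if_neg (by rw [Equiv.eq_symm_apply]; exact fun h => h0 h.symm)]
    refine le_trans (Finset.sum_le_sum (fun k (_ : k ∈ Finset.univ) => hterm k)) ?_
    rw [Finset.sum_ite_eq' Finset.univ (e.symm 0) (fun _ => 2 * n)]
    simp
  have hdegVn : n ≤ (MvPolynomial.finSuccEquiv ℂ n (Vpoly (n+1))).natDegree := by
    have hfac : ∀ x ∈ Finset.univ.sigma (fun a : Fin (n+1) => Finset.Ioi a),
        (MvPolynomial.finSuccEquiv ℂ n
          ((X x.2 : MvPolynomial (Fin (n+1)) ℂ) - X x.1)) ≠ 0 := by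
      rintro ⟨a, b⟩ hab
      rw [Finset.mem_sigma, Finset.mem_Ioi] at hab
      exact (map_ne_zero_iff _ (AlgEquiv.injective _)).mpr
        (sub_ne_zero.mpr fun h => (ne_of_gt hab.2) (MvPolynomial.X_injective h))
    rw [Vpoly_eq_prod, map_prod, Polynomial.natDegree_prod _ _ hfac, Finset.sum_sigma]
    have hsingle : (∑ b ∈ Finset.Ioi (0 : Fin (n+1)),
        (MvPolynomial.finSuccEquiv ℂ n
          ((X b : MvPolynomial (Fin (n+1)) ℂ) - X 0)).natDegree) = n := by
      have hval : ∀ b ∈ Finset.Ioi (0 : Fin (n+1)),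
          (MvPolynomial.finSuccEquiv ℂ n
            ((X b : MvPolynomial (Fin (n+1)) ℂ) - X 0)).natDegree = 1 := by
        intro b hb
        have hb0 : b ≠ 0 := ne_of_gt (Finset.mem_Ioi.mp hb)
        have hbs : b = (b.pred hb0).succ := (Fin.succ_pred b hb0).symm
        rw [map_sub, MvPolynomial.finSuccEquiv_X_zero, hbs, MvPolynomial.finSuccEquiv_X_succ]
        have hneg : (Polynomial.C (X (b.pred hb0)) - Polynomial.X :
            Polynomial (MvPolynomial (Fin n) ℂ))
            = -(Polynomial.X - Polynomial.C (X (b.pred hb0))) := by ring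
        rw [hneg, Polynomial.natDegree_neg, Polynomial.natDegree_X_sub_C]
      rw [Finset.sum_congr rfl hval]
      simp [Fin.card_Ioi]
    refine le_trans (le_of_eq hsingle.symm) ?_
    exact Finset.single_le_sum
      (f := fun a => ∑ b ∈ Finset.Ioi a,
        (MvPolynomial.finSuccEquiv ℂ n
          ((X b : MvPolynomial (Fin (n+1)) ℂ) - X a)).natDegree)
      (fun i _ => Nat.zero_le _) (Finset.mem_univ 0)
  have hdeg0 : MvPolynomial.degreeOf 0 P ≤ n := by
    by_cases hP0 : P = 0
    · simp [hP0]
    have hψ := congrArg (MvPolynomial.finSuccEquiv ℂ n) hDH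
    rw [map_mul] at hψ
    have hV0' : MvPolynomial.finSuccEquiv ℂ n (Vpoly (n+1)) ≠ 0 :=
      (map_ne_zero_iff _ (AlgEquiv.injective _)).mpr hV0
    have hP0' : MvPolynomial.finSuccEquiv ℂ n P ≠ 0 :=
      (map_ne_zero_iff _ (AlgEquiv.injective _)).mpr hP0
    have hmul := Polynomial.natDegree_mul hV0' hP0'
    rw [← hψ] at hmul
    rw [MvPolynomial.natDegree_finSuccEquiv] at hmul
    have h2 := MvPolynomial.natDegree_finSuccEquiv P
    omega
  have hdeg : ∀ j : Fin (n+1), MvPolynomial.degreeOf j P ≤ (n+1) - 1 := by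
    intro j
    have h1 := MvPolynomial.degreeOf_rename_of_injective
      (f := ⇑(Equiv.swap (0 : Fin (n+1)) j)) (p := P) (Equiv.injective _) 0
    rw [hsym (Equiv.swap 0 j), Equiv.swap_apply_left] at h1
    rw [← h1] at hdeg0
    simpa using hdeg0
  -- vanishing
  have hvanish : ∀ (j : Fin (n+1)) (x : Fin (n+1) → ℂ) (i₁ i₂ : Fin (n+1)), i₁ ≠ i₂ →
      x i₁ = y j → x i₂ = (q ^ 2)⁻¹ * y j → MvPolynomial.eval x P = 0 := by
    intro j x i₁ i₂ hne h1 h2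
    obtain ⟨c, hc⟩ := hcrel j
    set u : Fin (n+1) → MvPolynomial (Fin (n+1)) ℂ :=
      fun i => if i = i₁ then MvPolynomial.C (y j)
        else if i = i₂ then MvPolynomial.C ((q^2)⁻¹ * y j) else X i with hu
    have hui1 : u i₁ = MvPolynomial.C (y j) := by rw [hu]; simp
    have hui2 : u i₂ = MvPolynomial.C ((q^2)⁻¹ * y j) := by
      rw [hu]; simp [Ne.symm hne]
    have hmapH : ∀ (a k : Fin (n+1)),
        ((Hmat (n+1) q y).map (aeval u)) a k
          = Polynomial.aeval (u a) (hP (n+1) q y k) := by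
      intro a k
      simp only [Matrix.map_apply, Hmat, Matrix.of_apply]
      rw [← Polynomial.aeval_algHom_apply, aeval_X]
    have hrow1 : ∀ k, ((Hmat (n+1) q y).map (aeval u)) i₁ k
        = MvPolynomial.C ((hP (n+1) q y k).eval (y j)) := by
      intro k
      rw [hmapH, hui1, ← MvPolynomial.algebraMap_eq,
        Polynomial.aeval_algebraMap_apply_eq_algebraMap_eval, MvPolynomial.algebraMap_eq]
    have hrow2 : ∀ k, ((Hmat (n+1) q y).map (aeval u)) i₂ k
        = MvPolynomial.C ((hP (n+1) q y k).eval ((q^2)⁻¹ * y j)) := by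
      intro k
      rw [hmapH, hui2, ← MvPolynomial.algebraMap_eq,
        Polynomial.aeval_algebraMap_apply_eq_algebraMap_eval, MvPolynomial.algebraMap_eq]
    have hτH : aeval u ((Hmat (n+1) q y).det) = 0 := by
      have hmap : aeval u ((Hmat (n+1) q y).det)
          = ((Hmat (n+1) q y).map (aeval u)).det := RingHom.map_det _ _
      rw [hmap]
      have hrows : ((Hmat (n+1) q y).map (aeval u)) i₂
          = (MvPolynomial.C c : MvPolynomial (Fin (n+1)) ℂ) • ((Hmat (n+1) q y).map (aeval u)) i₁ := by
        funext k
        rw [Pi.smul_apply, smul_eq_mul, hrow1, hrow2, hc k, map_mul]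
      have hupd : ((Hmat (n+1) q y).map (aeval u))
          = (((Hmat (n+1) q y).map (aeval u))).updateRow i₂
            ((MvPolynomial.C c : MvPolynomial (Fin (n+1)) ℂ) • ((Hmat (n+1) q y).map (aeval u)) i₁) := by
        rw [← hrows, Matrix.updateRow_eq_self]
      rw [hupd, Matrix.det_updateRow_smul]
      have hzero : ((((Hmat (n+1) q y).map (aeval u))).updateRow i₂
          (((Hmat (n+1) q y).map (aeval u)) i₁)).det = 0 := by
        refine Matrix.det_zero_of_row_eq (Ne.symm hne) ?_
        rw [Matrix.updateRow_self, Matrix.updateRow_ne hne]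
      rw [hzero, mul_zero]
    have hCC : y j ≠ (q^2)⁻¹ * y j := by
      intro h
      have h5 : q ^ 2 * y j = 1 * y j := by
        nth_rewrite 1 [h]
        rw [one_mul, ← mul_assoc, mul_inv_cancel₀ (pow_ne_zero 2 hq), one_mul]
      exact hq2 (mul_right_cancel₀ (hy0 j) h5)
    have huinj : Function.Injective u := by
      intro a b hab
      simp only [hu] at hab
      by_cases ha1 : a = i₁
      · by_cases hb1 : b = i₁
        · rw [ha1, hb1]
        · rw [if_pos ha1] at hab
          by_cases hb2 : b = i₂
          · rw [if_neg hb1, if_pos hb2] at hab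
            exact absurd (MvPolynomial.C_injective _ _ hab) hCC
          · rw [if_neg hb1, if_neg hb2] at hab
            exact absurd hab.symm X_ne_C
      · by_cases ha2 : a = i₂
        · rw [if_neg ha1, if_pos ha2] at hab
          by_cases hb1 : b = i₁
          · rw [if_pos hb1] at hab
            exact absurd (MvPolynomial.C_injective _ _ hab).symm hCC
          · by_cases hb2 : b = i₂
            · rw [ha2, hb2]
            · rw [if_neg hb1, if_neg hb2] at hab
              exact absurd hab.symm X_ne_C
        · rw [if_neg ha1, if_neg ha2] at hab
          by_cases hb1 : b = i₁
          · rw [if_pos hb1] at hab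
            exact absurd hab X_ne_C
          · by_cases hb2 : b = i₂
            · rw [if_neg hb1, if_pos hb2] at hab
              exact absurd hab X_ne_C
            · rw [if_neg hb1, if_neg hb2] at hab
              exact MvPolynomial.X_injective hab
    have hτVd : aeval u (Vpoly (n+1)) = (Matrix.vandermonde u).det := by
      have hmap : aeval u (Vpoly (n+1))
          = ((Matrix.vandermonde fun i => (X i : MvPolynomial (Fin (n+1)) ℂ)).map
              (aeval u)).det := RingHom.map_det _ _
      rw [hmap]
      congr 1
      funext a b
      simp [Matrix.vandermonde, map_pow]
    have hτV : aeval u (Vpoly (n+1)) ≠ 0 := by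
      rw [hτVd, Ne, Matrix.det_vandermonde_eq_zero_iff]
      rintro ⟨a, b, hab, hane⟩
      exact hane (huinj hab)
    have hτP : aeval u P = 0 := by
      have h0 : aeval u (Vpoly (n+1)) * aeval u P = 0 := by
        rw [← map_mul, ← hDH, hτH]
      exact (mul_eq_zero.mp h0).resolve_left hτV
    have hcomp := MvPolynomial.comp_aeval_apply (f := u)
      (MvPolynomial.aeval x : MvPolynomial (Fin (n+1)) ℂ →ₐ[ℂ] ℂ) P
    rw [hτP, map_zero] at hcomp
    have hfun : (fun i => (MvPolynomial.aeval x :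
        MvPolynomial (Fin (n+1)) ℂ →ₐ[ℂ] ℂ) (u i)) = x := by
      funext i
      by_cases hi1 : i = i₁
      · subst hi1
        rw [hui1]
        simp only [MvPolynomial.aeval_C]
        simpa using h1.symm
      · by_cases hi2 : i = i₂
        · subst hi2
          rw [hui2]
          simp only [MvPolynomial.aeval_C]
          simpa using h2.symm
        · have : u i = X i := by rw [hu]; simp [hi1, hi2]
          rw [this, MvPolynomial.aeval_X]
    rw [hfun] at hcomp
    rw [← SVAux.aeval_eq_eval]
    exact hcomp.symm
  -- value at y
  have hvaly : MvPolynomial.eval y P =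
      (q - q⁻¹) ^ (n+1) * ∏ j, ∏ k ∈ Finset.univ.erase j, (q * y j - q⁻¹ * y k) := by
    have hMy : (Matrix.of fun j k => (hP (n+1) q y k).eval (y j))
        = Matrix.of fun j k => ((∏ m, (q * y j - q⁻¹ * y m)) * (y j)⁻¹)
            * ((Matrix.vandermonde y) j k) := by
      funext j k
      simp only [Matrix.of_apply, Matrix.vandermonde_apply]
      have h := hE1 j k
      have h6 : (∏ m, (q * y j - q⁻¹ * y m)) * (y j)⁻¹ * (y j ^ (k:ℕ)) * y j
          = y j ^ (k:ℕ) * ∏ m, (q * y j - q⁻¹ * y m) := by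
        have hinv : (y j)⁻¹ * y j = 1 := inv_mul_cancel₀ (hy0 j)
        calc (∏ m, (q * y j - q⁻¹ * y m)) * (y j)⁻¹ * (y j ^ (k:ℕ)) * y j
            = (y j ^ (k:ℕ) * ∏ m, (q * y j - q⁻¹ * y m)) * ((y j)⁻¹ * y j) := by ring
          _ = y j ^ (k:ℕ) * ∏ m, (q * y j - q⁻¹ * y m) := by rw [hinv, mul_one]
      exact mul_right_cancel₀ (hy0 j) (h.trans h6.symm)
    have h1 : MvPolynomial.eval y ((Hmat (n+1) q y).det)
        = (∏ j, ((∏ m, (q * y j - q⁻¹ * y m)) * (y j)⁻¹)) * (Matrix.vandermonde y).det := by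
      rw [hevalH y, hMy]
      exact Matrix.det_mul_column _ _
    rw [hDH, map_mul, hevalV y] at h1
    have h2 : MvPolynomial.eval y P = ∏ j, ((∏ m, (q * y j - q⁻¹ * y m)) * (y j)⁻¹) :=
      mul_left_cancel₀ hvdm_y (by linear_combination h1)
    rw [h2]
    have h4 : ∀ j : Fin (n+1), (q * y j - q⁻¹ * y j) * (y j)⁻¹ = q - q⁻¹ := by
      intro j
      have hinv : y j * (y j)⁻¹ = 1 := mul_inv_cancel₀ (hy0 j)
      calc (q * y j - q⁻¹ * y j) * (y j)⁻¹ = (q - q⁻¹) * (y j * (y j)⁻¹) := by ring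
        _ = q - q⁻¹ := by rw [hinv, mul_one]
    have h3 : ∀ j : Fin (n+1), (∏ m, (q * y j - q⁻¹ * y m)) * (y j)⁻¹
        = (q - q⁻¹) * ∏ m ∈ Finset.univ.erase j, (q * y j - q⁻¹ * y m) := by
      intro j
      rw [← Finset.mul_prod_erase Finset.univ _ (Finset.mem_univ j)]
      have h5 : (q * y j - q⁻¹ * y j) * (∏ m ∈ Finset.univ.erase j,
          (q * y j - q⁻¹ * y m)) * (y j)⁻¹
          = ((q * y j - q⁻¹ * y j) * (y j)⁻¹) * ∏ m ∈ Finset.univ.erase j,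
            (q * y j - q⁻¹ * y m) := by ring
      rw [h5, h4 j]
    rw [Finset.prod_congr rfl (fun j _ => h3 j), Finset.prod_mul_distrib, Finset.prod_const,
      Finset.card_univ, Fintype.card_fin]
  refine ⟨P, ⟨hsym, hdeg, hvanish, hvaly⟩, ?_⟩
  -- the determinant identity
  intro x
  have hM1 : (Matrix.of fun j k : Fin (n+1) => SixVertexTrig.pval p k (x j))
      = (Matrix.vandermonde x) * p.transpose := by
    funext j k
    rw [Matrix.mul_apply]
    simp only [Matrix.of_apply, SixVertexTrig.pval, Matrix.vandermonde_apply,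
      Matrix.transpose_apply]
    exact Finset.sum_congr rfl (fun m _ => by ring)
  have hM2 : (Matrix.of fun j k : Fin (n+1) =>
      SixVertexTrig.pval p k (x j) * SixVertexTrig.aTil (n+1) q y (x j) -
        q ^ (-((n+1 : ℕ) : ℤ)) * SixVertexTrig.pval p k (q ^ 2 * x j) *
          SixVertexTrig.dTil (n+1) y (x j))
      = (Matrix.of fun j m : Fin (n+1) => (gP (n+1) q y m).eval (x j)) * p.transpose := by
    funext j k
    rw [Matrix.mul_apply]
    simp only [Matrix.of_apply, Matrix.transpose_apply]
    have hterm : ∀ m : Fin (n+1), (gP (n+1) q y m).eval (x j) * p k m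
        = (p k m * x j ^ (m:ℕ)) * SixVertexTrig.aTil (n+1) q y (x j)
          - q ^ (-((n+1 : ℕ) : ℤ)) * (p k m * (q^2 * x j) ^ (m:ℕ)) *
            SixVertexTrig.dTil (n+1) y (x j) := by
      intro m
      rw [gP_eval]
      have hp2 : (q^2 * x j) ^ (m:ℕ) = q ^ (2 * (m:ℕ)) * x j ^ (m:ℕ) := by
        rw [mul_pow, ← pow_mul]
      rw [hp2, SixVertexTrig.aTil, SixVertexTrig.dTil]
      ring
    rw [Finset.sum_congr rfl (fun m _ => hterm m), Finset.sum_sub_distrib,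
      ← Finset.sum_mul, ← Finset.sum_mul, ← Finset.mul_sum]
    simp only [SixVertexTrig.pval]
  have hMg : Matrix.det (Matrix.of fun j m : Fin (n+1) => (gP (n+1) q y m).eval (x j))
      = (∏ j, x j) * Matrix.det (Matrix.of fun j m : Fin (n+1) =>
          (hP (n+1) q y m).eval (x j)) := by
    have hent : (Matrix.of fun j m : Fin (n+1) => (gP (n+1) q y m).eval (x j))
        = Matrix.of fun j m => x j *
            (Matrix.of fun j' m' : Fin (n+1) => (hP (n+1) q y m').eval (x j')) j m := by
      funext j m
      simp only [Matrix.of_apply]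
      rw [← hP_mul_X (n+1) q y m, Polynomial.eval_mul, Polynomial.eval_X]
      ring
    rw [hent]
    exact Matrix.det_mul_column _ _
  rw [hM1, hM2, Matrix.det_mul, Matrix.det_mul, hMg]
  have hdet := hevalH x
  rw [hDH, map_mul, hevalV x] at hdet
  rw [← hdet]
  ring

end SVMain

end SVAux

open SixVertexTrig in
/-- determinant representation, trigonometric case, second form:
there is a polynomial `P` satisfying the trigonometric DWBC conditions with
`P(x) ⬝ (∏_j x_j) ⬝ det[p_k(x_j)] = det[p_k(x_j) ã(x_j) - q^{-N} p_k(q² x_j) d̃(x_j)]`. -/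
theorem trig_det_representation_second (N : ℕ) (hN : 1 ≤ N) (q : ℂ) (hq : q ≠ 0)
    (hq2 : q ^ 2 ≠ 1) (y : Fin N → ℂ) (hy0 : ∀ j, y j ≠ 0)
    (hy : Function.Injective y)
    (hyq : ∀ j k : Fin N, j ≠ k → q ^ 2 * y j ≠ y k)
    (p : Matrix (Fin N) (Fin N) ℂ) (hp : IsUnit p.det) :
    ∃ P : MvPolynomial (Fin N) ℂ, TrigCond N q y P ∧
      ∀ x : Fin N → ℂ,
        MvPolynomial.eval x P * (∏ j, x j) *
            Matrix.det (Matrix.of fun j k : Fin N => pval p k (x j)) =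
          Matrix.det (Matrix.of fun j k : Fin N =>
            pval p k (x j) * aTil N q y (x j) -
              q ^ (-(N : ℤ)) * pval p k (q ^ 2 * x j) * dTil N y (x j)) := by
  obtain ⟨n, rfl⟩ : ∃ n, N = n + 1 := ⟨N - 1, (Nat.succ_pred_eq_of_pos hN).symm⟩
  exact SVMain.main_aux n q hq hq2 y hy0 hy hyq p
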